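/- Fix constants l > 0, g > 0, μ > 0 and a Lipschitz continuous function a : ℝ → ℝ, and let Φ be the pendulum set-valued map. Then the solutions of the differential inclusion (q̇,ṗ) ∈ Φ(q,p,t) are right-unique: for every initial condition (q₀,p₀,t₀) there exists t₁ > t₀ such that any two solutions with q(t₀) = q₀, p(t₀) = p₀ coincide on [t₀,t₁] (on the intersection of their domains). -/

import Mathlib

open MeasureTheory Set Filter

noncomputable section

/-- The scalar right-hand side of the pendulum equation for the angular velocity, where
`s ∈ [-1, 1]` is the direction of the dry friction force:
`h (q, p, t, s) = (a t / l)·sin q − (μ / l)·|a t·cos q − l·p² + g·sin q|·s − (g / l)·cos q`. -/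
def hRHS (l g μ : ℝ) (a : ℝ → ℝ) (q p t s : ℝ) : ℝ :=
  (a t / l) * Real.sin q - (μ / l) * |a t * Real.cos q - l * p ^ 2 + g * Real.sin q| * s
    - (g / l) * Real.cos q

/-- The pendulum set-valued map `Φ`: a singleton `{(p, h (q, p, t, p / |p|))}` for `p ≠ 0`,
and the segment `{(0, h (q, 0, t, s)) : s ∈ [−1, 1]}` for `p = 0`. -/
def Phi (l g μ : ℝ) (a : ℝ → ℝ) (q p t : ℝ) : Set (ℝ × ℝ) :=
  if p ≠ 0 then {(p, hRHS l g μ a q p t (p / |p|))}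
  else {v : ℝ × ℝ | ∃ s ∈ Set.Icc (-1 : ℝ) 1, v = (0, hRHS l g μ a q 0 t s)}

/-- `x` is a solution of the differential inclusion `ẋ ∈ F (x, t)` (in the plane) on the
time interval `I` containing `t₀`: there is a locally integrable `v` with
`x t = x t₀ + ∫_{t₀}^t v` on `I` and `v t ∈ F (x t) t` for a.e. `t ∈ I`. -/
def IsDISolution (F : ℝ × ℝ → ℝ → Set (ℝ × ℝ)) (I : Set ℝ) (t₀ : ℝ)
    (x : ℝ → ℝ × ℝ) : Prop :=
  ∃ v : ℝ → ℝ × ℝ, LocallyIntegrable v volume ∧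
    (∀ t ∈ I, x t = x t₀ + ∫ s in t₀..t, v s) ∧
    (∀ᵐ t ∂(volume.restrict I), v t ∈ F (x t) t)

lemma sq_primitive {f : ℝ → ℝ} {t₀ t : ℝ}
    (hf : IntegrableOn f (Ioc t₀ t)) :
    (∫ s in Ioc t₀ t, f s) ^ 2
      = 2 * ∫ s in Ioc t₀ t, (∫ u in Ioc t₀ s, f u) * f s := by
  set ν := volume.restrict (Ioc t₀ t) with hν
  have hfν : Integrable f ν := hf
  set gg : ℝ × ℝ → ℝ := fun z => f z.1 * f z.2 with hgg
  have hg : Integrable gg (ν.prod ν) := hfν.mul_prod hfν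
  have hS : MeasurableSet {z : ℝ × ℝ | z.2 ≤ z.1} :=
    measurableSet_le measurable_snd measurable_fst
  have hsplit : (∫ z, gg z ∂ν.prod ν)
      = (∫ z, ({z : ℝ × ℝ | z.2 ≤ z.1}.indicator gg) z ∂ν.prod ν)
        + (∫ z, ({z : ℝ × ℝ | z.2 ≤ z.1}ᶜ.indicator gg) z ∂ν.prod ν) := by
    rw [← integral_add (hg.indicator hS) (hg.indicator hS.compl)]
    congr 1
    ext z
    by_cases hz : z ∈ {z : ℝ × ℝ | z.2 ≤ z.1} <;>
      simp [Set.indicator_apply, hz]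
  have hprod : (∫ z, gg z ∂ν.prod ν) = (∫ s, f s ∂ν) ^ 2 := by
    rw [hgg, integral_prod_mul]; ring
  -- first piece
  have hI1 : (∫ z, ({z : ℝ × ℝ | z.2 ≤ z.1}.indicator gg) z ∂ν.prod ν)
      = ∫ s in Ioc t₀ t, (∫ u in Ioc t₀ s, f u) * f s := by
    rw [integral_prod _ (hg.indicator hS)]
    rw [hν]
    refine integral_congr_ae ((ae_restrict_iff' measurableSet_Ioc).2
      (Filter.Eventually.of_forall fun s hs => ?_))
    have : ∀ u : ℝ, ({z : ℝ × ℝ | z.2 ≤ z.1}.indicator gg) (s, u)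
        = (Iic s).indicator (fun u => f s * f u) u := by
      intro u
      by_cases hu : u ≤ s <;> simp [Set.indicator_apply, hu, hgg]
    simp_rw [this]
    rw [integral_indicator measurableSet_Iic, Measure.restrict_restrict measurableSet_Iic]
    have hset : Iic s ∩ Ioc t₀ t = Ioc t₀ s := by
      ext u; simp only [mem_inter_iff, mem_Iic, mem_Ioc]
      constructor
      · rintro ⟨h1, h2, _⟩; exact ⟨h2, h1⟩
      · rintro ⟨h1, h2⟩; exact ⟨h2, h1, h2.trans hs.2⟩
    rw [hset, integral_const_mul, mul_comm]
  -- second piece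
  have hI2 : (∫ z, ({z : ℝ × ℝ | z.2 ≤ z.1}ᶜ.indicator gg) z ∂ν.prod ν)
      = ∫ u in Ioc t₀ t, (∫ s in Ioc t₀ u, f s) * f u := by
    rw [integral_prod_symm _ (hg.indicator hS.compl)]
    rw [hν]
    refine integral_congr_ae ((ae_restrict_iff' measurableSet_Ioc).2
      (Filter.Eventually.of_forall fun u hu => ?_))
    have : ∀ s : ℝ, ({z : ℝ × ℝ | z.2 ≤ z.1}ᶜ.indicator gg) (s, u)
        = (Iio u).indicator (fun s => f s * f u) s := by
      intro s
      by_cases hsu : s < u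
      · simp [Set.indicator_apply, hsu, not_le.2 hsu, hgg]
      · simp [Set.indicator_apply, hsu, not_lt.1 hsu, hgg]
    simp_rw [this]
    rw [integral_indicator measurableSet_Iio, Measure.restrict_restrict measurableSet_Iio]
    have hset : Iio u ∩ Ioc t₀ t = Ioo t₀ u := by
      ext s; simp only [mem_inter_iff, mem_Iio, mem_Ioc, mem_Ioo]
      constructor
      · rintro ⟨h1, h2, _⟩; exact ⟨h2, h1⟩
      · rintro ⟨h1, h2⟩; exact ⟨h2, h1, (le_of_lt h2).trans hu.2⟩
    rw [hset, integral_mul_const, ← integral_Ioc_eq_integral_Ioo]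
  have : (∫ s, f s ∂ν) ^ 2
      = (∫ s in Ioc t₀ t, (∫ u in Ioc t₀ s, f u) * f s)
        + (∫ u in Ioc t₀ t, (∫ s in Ioc t₀ u, f s) * f u) := by
    rw [← hprod, hsplit, hI1, hI2]
  rw [hν] at this
  rw [this]; ring

lemma sin_lip (x y : ℝ) : |Real.sin x - Real.sin y| ≤ |x - y| := by
  rw [Real.sin_sub_sin, abs_mul, abs_mul]
  have h1 : |Real.sin ((x - y) / 2)| ≤ |x - y| / 2 := by
    simpa [abs_div] using Real.abs_sin_le_abs (x := (x - y) / 2)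
  have h2 : |Real.cos ((x + y) / 2)| ≤ 1 := Real.abs_cos_le_one _
  have h3 : |(2 : ℝ)| = 2 := by norm_num
  rw [h3]
  nlinarith [abs_nonneg (Real.sin ((x - y) / 2)), abs_nonneg (Real.cos ((x + y) / 2)),
    abs_nonneg (x - y)]

lemma cos_lip (x y : ℝ) : |Real.cos x - Real.cos y| ≤ |x - y| := by
  rw [Real.cos_sub_cos, abs_mul, abs_mul]
  have h1 : |Real.sin ((x - y) / 2)| ≤ |x - y| / 2 := by
    simpa [abs_div] using Real.abs_sin_le_abs (x := (x - y) / 2)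
  have h2 : |Real.sin ((x + y) / 2)| ≤ 1 := Real.abs_sin_le_one _
  have h3 : |(-2 : ℝ)| = 2 := by norm_num
  rw [h3]
  nlinarith [abs_nonneg (Real.sin ((x - y) / 2)), abs_nonneg (Real.sin ((x + y) / 2)),
    abs_nonneg (x - y)]

lemma abs3 (x y z : ℝ) : |x - y - z| ≤ |x| + |y| + |z| :=
  (abs_sub _ _).trans (add_le_add_left (abs_sub _ _) _)

lemma abs3' (x y z : ℝ) : |x - y + z| ≤ |x| + |y| + |z| :=
  (abs_add_le _ _).trans (add_le_add_left (abs_sub _ _) _)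

lemma Phi_mem {l g μ : ℝ} {a : ℝ → ℝ} {q p t : ℝ} {v : ℝ × ℝ}
    (h : v ∈ Phi l g μ a q p t) :
    ∃ s, |s| ≤ 1 ∧ (0 < p → s = 1) ∧ (p < 0 → s = -1) ∧
      v = (p, hRHS l g μ a q p t s) := by
  by_cases hp : p ≠ 0
  · rw [Phi, if_pos hp] at h
    refine ⟨p / |p|, ?_, ?_, ?_, h⟩
    · rw [abs_div, abs_abs, div_self (abs_ne_zero.2 hp)]
    · intro h0; rw [abs_of_pos h0, div_self (ne_of_gt h0)]
    · intro h0; rw [abs_of_neg h0]; field_simp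
  · push_neg at hp
    rw [Phi, if_neg (by simp [hp])] at h
    obtain ⟨s, hs, hv⟩ := h
    subst hp
    exact ⟨s, abs_le.2 ⟨hs.1, hs.2⟩, fun h0 => absurd h0 (lt_irrefl 0),
      fun h0 => absurd h0 (lt_irrefl 0), hv⟩

lemma sign_mono {p₁ p₂ s₁ s₂ : ℝ} (h₁ : |s₁| ≤ 1) (h₂ : |s₂| ≤ 1)
    (hp₁ : (0 < p₁ → s₁ = 1) ∧ (p₁ < 0 → s₁ = -1))
    (hp₂ : (0 < p₂ → s₂ = 1) ∧ (p₂ < 0 → s₂ = -1)) :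
    0 ≤ (s₁ - s₂) * (p₁ - p₂) := by
  rcases lt_trichotomy p₁ p₂ with h | h | h
  · have hs : s₁ ≤ s₂ := by
      rcases lt_trichotomy p₁ 0 with h1 | h1 | h1
      · rw [hp₁.2 h1]; linarith [abs_le.1 h₂]
      · have h2 : 0 < p₂ := by linarith
        rw [hp₂.1 h2]; linarith [abs_le.1 h₁]
      · have h2 : 0 < p₂ := by linarith
        rw [hp₁.1 h1, hp₂.1 h2]
    nlinarith
  · simp [h]
  · have hs : s₂ ≤ s₁ := by
      rcases lt_trichotomy p₂ 0 with h1 | h1 | h1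
      · rw [hp₂.2 h1]; linarith [abs_le.1 h₁]
      · have h2 : 0 < p₁ := by linarith
        rw [hp₁.1 h2]; linarith [abs_le.1 h₂]
      · have h2 : 0 < p₁ := by linarith
        rw [hp₂.1 h1, hp₁.1 h2]
    nlinarith

lemma final_alg {dq dp B S C₁ C₂ : ℝ}
    (hd1 : dp * B ≤ |dp| * (C₁ * |dq| + C₂ * |dp|))
    (hd2 : 0 ≤ S) (hC1 : 0 ≤ C₁) (hC2 : 0 ≤ C₂) :
    dq * dp + (dp * B - S) ≤ (1 + C₁ + C₂) * (dq ^ 2 + dp ^ 2) := by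
  have h1 : dq * dp ≤ |dq| * |dp| := by rw [← abs_mul]; exact le_abs_self _
  have h2 : 2 * (|dq| * |dp|) ≤ dq ^ 2 + dp ^ 2 := by
    have h := sq_nonneg (|dq| - |dp|)
    have h' : (|dq| - |dp|) ^ 2 = |dq| ^ 2 - 2 * (|dq| * |dp|) + |dp| ^ 2 := by ring
    linarith [sq_abs dq, sq_abs dp]
  have h3 : |dp| * (C₁ * |dq| + C₂ * |dp|) = C₁ * (|dq| * |dp|) + C₂ * (|dp| * |dp|) := by
    ring
  have h4 : |dp| * |dp| = dp ^ 2 := by rw [abs_mul_abs_self, sq]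
  have t1 : C₁ * (|dq| * |dp|) ≤ C₁ * (dq ^ 2 + dp ^ 2) :=
    mul_le_mul_of_nonneg_left (by linarith [sq_nonneg dq, sq_nonneg dp]) hC1
  have t2 : C₂ * dp ^ 2 ≤ C₂ * (dq ^ 2 + dp ^ 2) :=
    mul_le_mul_of_nonneg_left (by linarith [sq_nonneg dq]) hC2
  rw [h3, h4] at hd1
  linarith [mul_nonneg (abs_nonneg dq) (abs_nonneg dp)]

lemma oneSided {l g μ : ℝ} (hl : 0 < l) (hg : 0 < g) (hμ : 0 < μ)
    {a : ℝ → ℝ} {t Ma M : ℝ} (haM : |a t| ≤ Ma)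
    {z₁ z₂ v₁ v₂ : ℝ × ℝ} (hM₁ : |z₁.2| ≤ M) (hM₂ : |z₂.2| ≤ M)
    (h₁ : v₁ ∈ Phi l g μ a z₁.1 z₁.2 t) (h₂ : v₂ ∈ Phi l g μ a z₂.1 z₂.2 t) :
    (z₁.1 - z₂.1) * (v₁.1 - v₂.1) + (z₁.2 - z₂.2) * (v₁.2 - v₂.2)
      ≤ (1 + (1 + μ) * (Ma + g) / l + 2 * μ * M)
        * ((z₁.1 - z₂.1) ^ 2 + (z₁.2 - z₂.2) ^ 2) := by
  obtain ⟨s₁, hs₁, hsp₁, hsn₁, hv₁⟩ := Phi_mem h₁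
  obtain ⟨s₂, hs₂, hsp₂, hsn₂, hv₂⟩ := Phi_mem h₂
  clear h₁ h₂
  obtain ⟨q₁, p₁⟩ := z₁
  obtain ⟨q₂, p₂⟩ := z₂
  simp only at hM₁ hM₂ hsp₁ hsn₁ hsp₂ hsn₂ hv₁ hv₂ ⊢
  subst hv₁ hv₂
  simp only [hRHS]
  set A₁ := a t * Real.cos q₁ - l * p₁ ^ 2 + g * Real.sin q₁ with hA₁
  set A₂ := a t * Real.cos q₂ - l * p₂ ^ 2 + g * Real.sin q₂ with hA₂
  have hMa : 0 ≤ Ma := le_trans (abs_nonneg _) haM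
  have hM : 0 ≤ M := le_trans (abs_nonneg _) hM₁
  have hsin : |Real.sin q₁ - Real.sin q₂| ≤ |q₁ - q₂| := sin_lip q₁ q₂
  have hcos : |Real.cos q₁ - Real.cos q₂| ≤ |q₁ - q₂| := cos_lip q₁ q₂
  have hAd : |A₁ - A₂| ≤ (Ma + g) * |q₁ - q₂| + 2 * l * M * |p₁ - p₂| := by
    have e : A₁ - A₂ = a t * (Real.cos q₁ - Real.cos q₂)
        - l * ((p₁ + p₂) * (p₁ - p₂)) + g * (Real.sin q₁ - Real.sin q₂) := by
      rw [hA₁, hA₂]; ring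
    rw [e]
    refine (abs3' _ _ _).trans ?_
    rw [abs_mul, abs_mul, abs_mul, abs_mul]
    have hpp : |p₁ + p₂| ≤ 2 * M := (abs_add_le _ _).trans (by linarith)
    have h1 : |a t| * |Real.cos q₁ - Real.cos q₂| ≤ Ma * |q₁ - q₂| :=
      mul_le_mul haM hcos (abs_nonneg _) hMa
    have h2 : |g| * |Real.sin q₁ - Real.sin q₂| ≤ g * |q₁ - q₂| := by
      rw [abs_of_pos hg]; exact mul_le_mul_of_nonneg_left hsin hg.le
    have h3 : |l| * (|p₁ + p₂| * |p₁ - p₂|) ≤ 2 * l * M * |p₁ - p₂| := by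
      rw [abs_of_pos hl]
      have := mul_le_mul_of_nonneg_left
        (mul_le_mul_of_nonneg_right hpp (abs_nonneg (p₁ - p₂))) hl.le
      linarith
    linarith
  have habs : |(|A₁| - |A₂|)| ≤ |A₁ - A₂| := abs_abs_sub_abs_le_abs_sub _ _
  have hsign : 0 ≤ (s₁ - s₂) * (p₁ - p₂) := sign_mono hs₁ hs₂ ⟨hsp₁, hsn₁⟩ ⟨hsp₂, hsn₂⟩
  set dq := q₁ - q₂ with hdq
  set dp := p₁ - p₂ with hdp
  set B := a t / l * (Real.sin q₁ - Real.sin q₂) - g / l * (Real.cos q₁ - Real.cos q₂)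
      - μ / l * ((|A₁| - |A₂|) * s₂) with hBdef
  have key : dp * ((a t / l * Real.sin q₁ - μ / l * |A₁| * s₁ - g / l * Real.cos q₁)
      - (a t / l * Real.sin q₂ - μ / l * |A₂| * s₂ - g / l * Real.cos q₂))
      = dp * B - μ / l * |A₁| * ((s₁ - s₂) * dp) := by
    rw [hBdef, hdp]; ring
  have hB : |B| ≤ ((1 + μ) * (Ma + g) / l) * |dq| + 2 * μ * M * |dp| := by
    refine (abs3 _ _ _).trans ?_
    rw [abs_mul, abs_mul, abs_mul, abs_mul, abs_div, abs_div, abs_div,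
      abs_of_pos hl, abs_of_pos hg, abs_of_pos hμ]
    have h1 : |a t| / l * |Real.sin q₁ - Real.sin q₂| ≤ Ma / l * |dq| :=
      mul_le_mul (by gcongr) hsin (abs_nonneg _) (by positivity)
    have h2 : g / l * |Real.cos q₁ - Real.cos q₂| ≤ g / l * |dq| :=
      mul_le_mul_of_nonneg_left hcos (by positivity)
    have h3 : μ / l * (|(|A₁| - |A₂|)| * |s₂|)
        ≤ μ / l * ((Ma + g) * |dq| + 2 * l * M * |dp|) := by
      refine mul_le_mul_of_nonneg_left ?_ (by positivity)
      calc |(|A₁| - |A₂|)| * |s₂| ≤ |(|A₁| - |A₂|)| * 1 :=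
            mul_le_mul_of_nonneg_left hs₂ (abs_nonneg _)
        _ = |(|A₁| - |A₂|)| := mul_one _
        _ ≤ (Ma + g) * |dq| + 2 * l * M * |dp| := habs.trans hAd
    have e : ((1 + μ) * (Ma + g) / l) * |dq| + 2 * μ * M * |dp|
        = Ma / l * |dq| + g / l * |dq| + μ / l * ((Ma + g) * |dq| + 2 * l * M * |dp|) := by
      field_simp; ring
    rw [e]; linarith
  have hd1 : dp * B ≤ |dp| * (((1 + μ) * (Ma + g) / l) * |dq| + 2 * μ * M * |dp|) := by
    calc dp * B ≤ |dp * B| := le_abs_self _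
      _ = |dp| * |B| := abs_mul _ _
      _ ≤ _ := mul_le_mul_of_nonneg_left hB (abs_nonneg _)
  have hd2 : 0 ≤ μ / l * |A₁| * ((s₁ - s₂) * dp) :=
    mul_nonneg (by positivity) hsign
  rw [key]
  exact final_alg hd1 hd2 (by positivity) (by positivity)

set_option maxHeartbeats 1000000 in
/-- **Right uniqueness for the pendulum differential inclusion.** For every initial
condition `(q₀, p₀, t₀)` there is `t₁ > t₀` such that any two solutions of
`(q̇, ṗ) ∈ Φ (q, p, t)` with `(q, p) (t₀) = (q₀, p₀)` coincide on `[t₀, t₁]`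
(on the intersection of their domains). -/
theorem stmt6 (l g μ : ℝ) (hl : 0 < l) (hg : 0 < g) (hμ : 0 < μ)
    (a : ℝ → ℝ) (K : NNReal) (ha : LipschitzWith K a) :
    ∀ q₀ p₀ t₀ : ℝ, ∃ t₁ > t₀, ∀ s₁ s₂ : ℝ, ∀ x₁ x₂ : ℝ → ℝ × ℝ,
      IsDISolution (fun z t => Phi l g μ a z.1 z.2 t) (Set.Icc t₀ s₁) t₀ x₁ →
      x₁ t₀ = (q₀, p₀) →
      IsDISolution (fun z t => Phi l g μ a z.1 z.2 t) (Set.Icc t₀ s₂) t₀ x₂ →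
      x₂ t₀ = (q₀, p₀) →
      ∀ t ∈ Set.Icc t₀ t₁ ∩ Set.Icc t₀ s₁ ∩ Set.Icc t₀ s₂, x₁ t = x₂ t := by
  intro q₀ p₀ t₀
  refine ⟨t₀ + 1, by linarith, ?_⟩
  intro s₁ s₂ x₁ x₂ hx₁ hx₁0 hx₂ hx₂0 t ht
  obtain ⟨⟨⟨ht₀t, htt₁⟩, -, hts₁⟩, -, hts₂⟩ := ht
  obtain ⟨v₁, hv₁loc, hx₁int, hv₁mem⟩ := hx₁
  obtain ⟨v₂, hv₂loc, hx₂int, hv₂mem⟩ := hx₂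
  -- interval integrability of locally integrable functions
  have hii : ∀ (v : ℝ → ℝ × ℝ), LocallyIntegrable v volume →
      ∀ c d : ℝ, IntervalIntegrable v volume c d := fun v hv c d =>
    (hv.integrableOn_isCompact isCompact_uIcc).intervalIntegrable
  -- the common final time
  set T := min s₁ (min s₂ (t₀ + 1)) with hTdef
  have hTs₁ : T ≤ s₁ := min_le_left _ _
  have hTs₂ : T ≤ s₂ := le_trans (min_le_right _ _) (min_le_left _ _)
  have hT0 : t₀ ≤ T := le_min (le_trans ht₀t hts₁)
    (le_min (le_trans ht₀t hts₂) (by linarith))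
  have htT : t ≤ T := le_min hts₁ (le_min hts₂ htt₁)
  -- the difference of velocities and its coordinates
  set w : ℝ → ℝ × ℝ := fun s => v₁ s - v₂ s with hwdef
  have hwloc : LocallyIntegrable w volume := hv₁loc.sub hv₂loc
  have hwii : ∀ c d : ℝ, IntervalIntegrable w volume c d := hii w hwloc
  have hw1ii : ∀ c d : ℝ, IntervalIntegrable (fun s => (w s).1) volume c d := by
    intro c d
    have h1 : IntegrableOn w (Set.uIcc c d) volume :=
      hwloc.integrableOn_isCompact isCompact_uIcc
    have h2 : IntegrableOn (fun s => (w s).1) (Set.uIcc c d) volume := h1.fst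
    exact h2.intervalIntegrable
  have hw2ii : ∀ c d : ℝ, IntervalIntegrable (fun s => (w s).2) volume c d := by
    intro c d
    have h1 : IntegrableOn w (Set.uIcc c d) volume :=
      hwloc.integrableOn_isCompact isCompact_uIcc
    have h2 : IntegrableOn (fun s => (w s).2) (Set.uIcc c d) volume := h1.snd
    exact h2.intervalIntegrable
  set Y₁ : ℝ → ℝ := fun τ => ∫ s in t₀..τ, (w s).1 with hY₁def
  set Y₂ : ℝ → ℝ := fun τ => ∫ s in t₀..τ, (w s).2 with hY₂def
  have hY₁cont : Continuous Y₁ := intervalIntegral.continuous_primitive hw1ii t₀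
  have hY₂cont : Continuous Y₂ := intervalIntegral.continuous_primitive hw2ii t₀
  have hfst : ∀ τ : ℝ, (∫ s in t₀..τ, w s).1 = Y₁ τ := by
    intro τ
    have h := (ContinuousLinearMap.fst ℝ ℝ ℝ).intervalIntegral_comp_comm (hwii t₀ τ)
    simpa using h.symm
  have hsnd : ∀ τ : ℝ, (∫ s in t₀..τ, w s).2 = Y₂ τ := by
    intro τ
    have h := (ContinuousLinearMap.snd ℝ ℝ ℝ).intervalIntegral_comp_comm (hwii t₀ τ)
    simpa using h.symm
  -- x₁ - x₂ is the primitive of w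
  have hxy : ∀ τ ∈ Icc t₀ T, x₁ τ - x₂ τ = ∫ s in t₀..τ, w s := by
    intro τ hτ
    rw [hx₁int τ ⟨hτ.1, hτ.2.trans hTs₁⟩, hx₂int τ ⟨hτ.1, hτ.2.trans hTs₂⟩, hx₁0, hx₂0,
      hwdef, intervalIntegral.integral_sub (hii v₁ hv₁loc t₀ τ) (hii v₂ hv₂loc t₀ τ)]
    abel
  -- continuity and boundedness of the solutions
  have hx₁cont : ContinuousOn x₁ (Icc t₀ s₁) :=
    ((continuous_const.add
      (intervalIntegral.continuous_primitive (hii v₁ hv₁loc) t₀)).continuousOn).congr hx₁int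
  have hx₂cont : ContinuousOn x₂ (Icc t₀ s₂) :=
    ((continuous_const.add
      (intervalIntegral.continuous_primitive (hii v₂ hv₂loc) t₀)).continuousOn).congr hx₂int
  obtain ⟨Ma, haM⟩ := isCompact_Icc.exists_bound_of_continuousOn
    (s := Icc t₀ T) ha.continuous.continuousOn
  obtain ⟨M₁, hM₁⟩ := isCompact_Icc.exists_bound_of_continuousOn
    (s := Icc t₀ T) (hx₁cont.mono (Icc_subset_Icc le_rfl hTs₁))
  obtain ⟨M₂, hM₂⟩ := isCompact_Icc.exists_bound_of_continuousOn
    (s := Icc t₀ T) (hx₂cont.mono (Icc_subset_Icc le_rfl hTs₂))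
  set M := max M₁ M₂ with hMdef
  have hbnd₁ : ∀ τ ∈ Icc t₀ T, |(x₁ τ).2| ≤ M := fun τ hτ =>
    le_trans (le_trans (norm_snd_le (x₁ τ)) (hM₁ τ hτ)) (le_max_left _ _)
  have hbnd₂ : ∀ τ ∈ Icc t₀ T, |(x₂ τ).2| ≤ M := fun τ hτ =>
    le_trans (le_trans (norm_snd_le (x₂ τ)) (hM₂ τ hτ)) (le_max_right _ _)
  have haM' : ∀ τ ∈ Icc t₀ T, |a τ| ≤ Ma := fun τ hτ => haM τ hτ
  have hMa0 : 0 ≤ Ma := le_trans (abs_nonneg _) (haM' t₀ ⟨le_rfl, hT0⟩)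
  have hM0 : 0 ≤ M := le_trans (abs_nonneg _) (hbnd₁ t₀ ⟨le_rfl, hT0⟩)
  set C : ℝ := 1 + (1 + μ) * (Ma + g) / l + 2 * μ * M with hCdef
  have hC0 : 0 ≤ C := by rw [hCdef]; positivity
  -- the squared distance function
  set φ : ℝ → ℝ := fun τ => Y₁ τ ^ 2 + Y₂ τ ^ 2 with hφdef
  have hφcont : Continuous φ := ((hY₁cont.pow 2).add (hY₂cont.pow 2))
  have hφ0 : ∀ τ, 0 ≤ φ τ := fun τ => add_nonneg (sq_nonneg _) (sq_nonneg _)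
  -- the integrand of the expansion
  set G : ℝ → ℝ := fun s => Y₁ s * (w s).1 + Y₂ s * (w s).2 with hGdef
  have hGint : ∀ τ, t₀ ≤ τ → IntegrableOn G (Ioc t₀ τ) volume := by
    intro τ hτ
    apply Integrable.add
    · exact IntegrableOn.continuousOn_mul_of_subset hY₁cont.continuousOn
        ((hw1ii t₀ τ).1) isCompact_Icc
        measurableSet_Ioc Ioc_subset_Icc_self
    · exact IntegrableOn.continuousOn_mul_of_subset hY₂cont.continuousOn
        ((hw2ii t₀ τ).1) isCompact_Icc
        measurableSet_Ioc Ioc_subset_Icc_self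
  -- the expansion of φ as an integral
  have hφeq : ∀ τ, t₀ ≤ τ → φ τ = 2 * ∫ s in Ioc t₀ τ, G s := by
    intro τ hτ
    have e1 : Y₁ τ ^ 2 = 2 * ∫ s in Ioc t₀ τ, (∫ u in Ioc t₀ s, (w u).1) * (w s).1 := by
      rw [hY₁def]
      simp only [intervalIntegral.integral_of_le hτ]
      exact sq_primitive ((hw1ii t₀ τ).1)
    have e2 : Y₂ τ ^ 2 = 2 * ∫ s in Ioc t₀ τ, (∫ u in Ioc t₀ s, (w u).2) * (w s).2 := by
      rw [hY₂def]
      simp only [intervalIntegral.integral_of_le hτ]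
      exact sq_primitive ((hw2ii t₀ τ).1)
    have c1 : ∫ s in Ioc t₀ τ, (∫ u in Ioc t₀ s, (w u).1) * (w s).1
        = ∫ s in Ioc t₀ τ, Y₁ s * (w s).1 := by
      refine integral_congr_ae ((ae_restrict_iff' measurableSet_Ioc).2
        (Filter.Eventually.of_forall fun s hs => ?_))
      rw [hY₁def]
      simp only [intervalIntegral.integral_of_le hs.1.le]
    have c2 : ∫ s in Ioc t₀ τ, (∫ u in Ioc t₀ s, (w u).2) * (w s).2
        = ∫ s in Ioc t₀ τ, Y₂ s * (w s).2 := by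
      refine integral_congr_ae ((ae_restrict_iff' measurableSet_Ioc).2
        (Filter.Eventually.of_forall fun s hs => ?_))
      rw [hY₂def]
      simp only [intervalIntegral.integral_of_le hs.1.le]
    have hint1 : IntegrableOn (fun s => Y₁ s * (w s).1) (Ioc t₀ τ) volume :=
      IntegrableOn.continuousOn_mul_of_subset hY₁cont.continuousOn
        ((hw1ii t₀ τ).1) isCompact_Icc
        measurableSet_Ioc Ioc_subset_Icc_self
    have hint2 : IntegrableOn (fun s => Y₂ s * (w s).2) (Ioc t₀ τ) volume :=
      IntegrableOn.continuousOn_mul_of_subset hY₂cont.continuousOn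
        ((hw2ii t₀ τ).1) isCompact_Icc
        measurableSet_Ioc Ioc_subset_Icc_self
    rw [hφdef]
    simp only
    rw [e1, e2, c1, c2, hGdef, ← mul_add, ← integral_add hint1 hint2]
  -- the a.e. pointwise bound on the integrand
  have hGb : ∀ τ ∈ Icc t₀ T,
      ∀ᵐ s ∂volume.restrict (Ioc t₀ τ), G s ≤ C * φ s := by
    intro τ hτ
    have hsub₁ : Ioc t₀ τ ⊆ Icc t₀ s₁ := fun s hs =>
      ⟨hs.1.le, hs.2.trans (hτ.2.trans hTs₁)⟩
    have hsub₂ : Ioc t₀ τ ⊆ Icc t₀ s₂ := fun s hs =>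
      ⟨hs.1.le, hs.2.trans (hτ.2.trans hTs₂)⟩
    filter_upwards [ae_restrict_of_ae_restrict_of_subset hsub₁ hv₁mem,
      ae_restrict_of_ae_restrict_of_subset hsub₂ hv₂mem,
      ae_restrict_mem measurableSet_Ioc] with s hm₁ hm₂ hs
    have hsT : s ∈ Icc t₀ T := ⟨hs.1.le, hs.2.trans hτ.2⟩
    have hdiff := hxy s hsT
    have e1 : (x₁ s).1 - (x₂ s).1 = Y₁ s := by
      rw [← Prod.fst_sub, hdiff, hfst]
    have e2 : (x₁ s).2 - (x₂ s).2 = Y₂ s := by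
      rw [← Prod.snd_sub, hdiff, hsnd]
    have key := oneSided hl hg hμ (haM' s hsT) (hbnd₁ s hsT) (hbnd₂ s hsT) hm₁ hm₂
    rw [e1, e2] at key
    have ew1 : (w s).1 = (v₁ s).1 - (v₂ s).1 := rfl
    have ew2 : (w s).2 = (v₁ s).2 - (v₂ s).2 := rfl
    rw [hGdef]
    simp only
    rw [ew1, ew2, hφdef]
    exact key
  -- the Grönwall-type integral inequality
  have hφle : ∀ τ ∈ Icc t₀ T, φ τ ≤ 2 * C * ∫ s in t₀..τ, φ s := by
    intro τ hτ
    rw [hφeq τ hτ.1]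
    have hmono : ∫ s in Ioc t₀ τ, G s ≤ ∫ s in Ioc t₀ τ, C * φ s :=
      integral_mono_ae (hGint τ hτ.1)
        (((hφcont.integrableOn_Ioc).const_mul C)) (hGb τ hτ)
    rw [intervalIntegral.integral_of_le hτ.1]
    calc 2 * ∫ s in Ioc t₀ τ, G s ≤ 2 * ∫ s in Ioc t₀ τ, C * φ s := by linarith
      _ = 2 * C * ∫ s in Ioc t₀ τ, φ s := by rw [integral_const_mul]; ring
  -- Grönwall: the primitive of φ vanishes
  set m : ℝ → ℝ := fun τ => ∫ s in t₀..τ, φ s with hmdef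
  have hm' : ∀ τ : ℝ, HasDerivAt m (φ τ) τ := fun τ =>
    intervalIntegral.integral_hasDerivAt_right (hφcont.intervalIntegrable t₀ τ)
      (hφcont.stronglyMeasurableAtFilter volume (nhds τ)) hφcont.continuousAt
  have hmcont : Continuous m :=
    intervalIntegral.continuous_primitive (fun c d => hφcont.intervalIntegrable c d) t₀
  have hm0 : ∀ τ ∈ Icc t₀ T, 0 ≤ m τ := fun τ hτ =>
    intervalIntegral.integral_nonneg hτ.1 fun s _ => hφ0 s
  have hgron : ∀ τ ∈ Icc t₀ T, ‖m τ‖ ≤ gronwallBound 0 (2 * C) 0 (τ - t₀) := by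
    refine norm_le_gronwallBound_of_norm_deriv_right_le hmcont.continuousOn
      (fun x _ => (hm' x).hasDerivWithinAt) (by simp [hmdef]) ?_
    intro x hx
    rw [Real.norm_eq_abs, Real.norm_eq_abs, abs_of_nonneg (hφ0 x),
      abs_of_nonneg (hm0 x ⟨hx.1, hx.2.le⟩), add_zero]
    exact hφle x ⟨hx.1, hx.2.le⟩
  have htmem : t ∈ Icc t₀ T := ⟨ht₀t, htT⟩
  have hmt : m t = 0 := by
    have h := hgron t htmem
    rw [gronwallBound_ε0_δ0] at h
    exact norm_le_zero_iff.mp h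
  have hφt : φ t = 0 := by
    refine le_antisymm ?_ (hφ0 t)
    have h := hφle t htmem
    have hmeq : (∫ s in t₀..t, φ s) = m t := rfl
    rw [hmeq, hmt] at h
    linarith
  have hY1t : Y₁ t = 0 := by
    have h := hφt
    rw [hφdef] at h
    simp only at h
    nlinarith [sq_nonneg (Y₁ t), sq_nonneg (Y₂ t)]
  have hY2t : Y₂ t = 0 := by
    have h := hφt
    rw [hφdef] at h
    simp only at h
    nlinarith [sq_nonneg (Y₁ t), sq_nonneg (Y₂ t)]
  have hzero : x₁ t - x₂ t = 0 := by
    rw [hxy t htmem]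
    exact Prod.ext_iff.mpr ⟨by rw [hfst t, hY1t]; rfl, by rw [hsnd t, hY2t]; rfl⟩
  exact sub_eq_zero.mp hzero
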